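/- Let $w = abcacb$ over $A = \{a,b,c\}$ and let $L_2 = (A^* \setminus F(w^*)) \cup \{w^{1+2k} : k \geq 0\}$, where $F(w^*)$ is the set of all factors of powers of $w$. Then for all words $p, q, u \in A^*$: if $pq \in L_2$ then $p u^2 q \in L_2$. -/

import Mathlib

/-- `k`-fold concatenation of a word. -/
def wpow {A : Type*} (u : List A) (k : ℕ) : List A := (List.replicate k u).flatten

/-- residue pattern of the 6-periodic word (abcacb)^ω, as numbers 0,1,2. -/
def pat (n : ℕ) : ℕ :=
  if n % 6 = 0 ∨ n % 6 = 3 then 0 else if n % 6 = 1 ∨ n % 6 = 5 then 1 else 2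

def xw {A : Type*} (a b c : A) (n : ℕ) : A :=
  if pat n = 0 then a else if pat n = 1 then b else c

def seg {A : Type*} (a b c : A) (i n : ℕ) : List A :=
  (List.range n).map (fun t => xw a b c (i + t))

lemma pat_congr {m n : ℕ} (h : m % 6 = n % 6) : pat m = pat n := by
  unfold pat; rw [h]

lemma pat_lt (n : ℕ) : pat n < 3 := by unfold pat; split_ifs <;> omega

lemma xw_eq_iff {A : Type*} {a b c : A} (hab : a ≠ b) (hac : a ≠ c) (hbc : b ≠ c)
    {m n : ℕ} : xw a b c m = xw a b c n ↔ pat m = pat n := by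
  have hm : pat m = 0 ∨ pat m = 1 ∨ pat m = 2 := by have := pat_lt m; omega
  have hn : pat n = 0 ∨ pat n = 1 ∨ pat n = 2 := by have := pat_lt n; omega
  unfold xw
  rcases hm with h1 | h1 | h1 <;> rcases hn with h2 | h2 | h2 <;>
    simp [h1, h2, hab, hac, hbc, hab.symm, hac.symm, hbc.symm]

lemma seg_length {A : Type*} (a b c : A) (i n : ℕ) : (seg a b c i n).length = n := by
  simp [seg]

lemma seg_append {A : Type*} (a b c : A) (i m n : ℕ) :
    seg a b c i (m + n) = seg a b c i m ++ seg a b c (i + m) n := by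
  unfold seg
  rw [List.range_add, List.map_append, List.map_map]
  congr 1
  apply List.map_congr_left
  intro t _
  simp [Function.comp, Nat.add_assoc]

lemma seg_shift {A : Type*} (a b c : A) (i k n : ℕ) :
    seg a b c (i + 6 * k) n = seg a b c i n := by
  unfold seg
  apply List.map_congr_left
  intro t _
  unfold xw
  rw [pat_congr (show (i + 6 * k + t) % 6 = (i + t) % 6 by omega)]

lemma seg_eq_iff {A : Type*} (a b c : A) (i j n : ℕ) :
    seg a b c i n = seg a b c j n ↔ ∀ t < n, xw a b c (i + t) = xw a b c (j + t) := by
  unfold seg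
  rw [List.map_inj_left]
  simp

lemma wpow_eq {A : Type*} (a b c : A) (k : ℕ) :
    wpow [a, b, c, a, c, b] k = seg a b c 0 (6 * k) := by
  induction k with
  | zero => simp [wpow, seg]
  | succ k ih =>
    have h1 : wpow [a, b, c, a, c, b] (k + 1) = [a, b, c, a, c, b] ++ wpow [a, b, c, a, c, b] k := by
      simp [wpow, List.replicate_succ]
    rw [h1, ih, show 6 * (k + 1) = 6 + 6 * k by ring, seg_append,
      show (0 : ℕ) + 6 = 0 + 6 * 1 by ring, seg_shift]
    congr 1

lemma infix_iff {A : Type*} (a b c : A) (v : List A) (k : ℕ) :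
    v <:+: wpow [a, b, c, a, c, b] k ↔
      ∃ i, i + v.length ≤ 6 * k ∧ v = seg a b c i v.length := by
  constructor
  · rintro ⟨s, t, h⟩
    have hlen : s.length + (v.length + t.length) = 6 * k := by
      have := congrArg List.length h
      simp [wpow_eq a b c k, seg_length] at this
      omega
    rw [wpow_eq a b c k, show 6 * k = s.length + (v.length + t.length) from hlen.symm,
      seg_append, seg_append] at h
    rw [List.append_assoc] at h
    obtain ⟨-, h2⟩ := List.append_inj h (seg_length a b c 0 s.length).symm
    obtain ⟨h3, -⟩ := List.append_inj h2 (seg_length a b c _ v.length).symm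
    exact ⟨s.length, by omega, by simpa using h3⟩
  · rintro ⟨i, hle, hv⟩
    set R := 6 * k - (i + v.length) with hR
    refine ⟨seg a b c 0 i, seg a b c (i + v.length) R, ?_⟩
    have hsum : 6 * k = i + (v.length + R) := by omega
    rw [wpow_eq a b c k, hsum, seg_append, seg_append]
    simp only [Nat.zero_add]
    rw [List.append_assoc, ← hv]

lemma S2 : ∀ r < 6, ∀ e < 6, 0 < e → ∃ t, t < e ∧ pat (r + t) ≠ pat (r + t + e) := by
  decide

lemma S3 : ∀ r < 6, 0 < r → ∃ t, t < 6 ∧ pat (r + t) ≠ pat t := by decide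

lemma SQ {j d : ℕ} (h : ∀ t < d, pat (j + t) = pat (j + t + d)) : d % 6 = 0 := by
  by_contra he
  obtain ⟨t, ht, hne⟩ := S2 (j % 6) (by omega) (d % 6) (by omega) (by omega)
  apply hne
  rw [pat_congr (show (j % 6 + t) % 6 = (j + t) % 6 by omega),
    pat_congr (show (j % 6 + t + d % 6) % 6 = (j + t + d) % 6 by omega)]
  exact h t (by omega)

lemma AL {i n : ℕ} (hn : 6 ≤ n) (h : ∀ t < n, pat (i + t) = pat t) : i % 6 = 0 := by
  by_contra hi
  obtain ⟨t, ht, hne⟩ := S3 (i % 6) (by omega) (by omega)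
  apply hne
  rw [pat_congr (show (i % 6 + t) % 6 = (i + t) % 6 by omega)]
  exact h t (by omega)

theorem stmt7 {A : Type*} (a b c : A)
    (hab : a ≠ b) (hac : a ≠ c) (hbc : b ≠ c)
    (L₂ : Set (List A))
    (hL : L₂ = {v | ¬ ∃ k : ℕ, v <:+: wpow [a, b, c, a, c, b] k}
             ∪ {v | ∃ k : ℕ, v = wpow [a, b, c, a, c, b] (1 + 2 * k)}) :
    ∀ p q u : List A, p ++ q ∈ L₂ → p ++ u ++ u ++ q ∈ L₂ := by
  subst hL
  intro p q u h
  by_cases hinf : ∃ k, (p ++ u ++ u ++ q) <:+: wpow [a, b, c, a, c, b] k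
  swap
  · exact Or.inl hinf
  obtain ⟨K, hK⟩ := hinf
  rw [infix_iff a b c] at hK
  obtain ⟨i, hle, heq⟩ := hK
  set np := p.length with hnp
  set d := u.length with hd
  set nq := q.length with hnq
  have hlen : (p ++ u ++ u ++ q).length = np + (d + (d + nq)) := by
    simp only [List.length_append]; omega
  rw [hlen] at hle heq
  rw [seg_append, seg_append, seg_append] at heq
  rw [List.append_assoc, List.append_assoc] at heq
  obtain ⟨hp, heq1⟩ := List.append_inj heq (by rw [seg_length])
  obtain ⟨hu1, heq2⟩ := List.append_inj heq1 (by rw [seg_length])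
  obtain ⟨hu2, hq⟩ := List.append_inj heq2 (by rw [seg_length])
  -- the square forces d ≡ 0 (mod 6)
  have hsq : seg a b c (i + np) d = seg a b c (i + np + d) d := hu1.symm.trans hu2
  rw [seg_eq_iff] at hsq
  have hd6 : d % 6 = 0 := by
    apply SQ (j := i + np)
    intro t ht
    have := hsq t ht
    rw [xw_eq_iff hab hac hbc] at this
    rw [this]
    exact pat_congr (by omega)
  -- p ++ q is a factor of w^K
  have hq' : q = seg a b c (i + np) nq := by
    rw [hq]
    rw [show i + np + d + d = (i + np) + 6 * (2 * (d / 6)) by omega, seg_shift]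
  have hpq : p ++ q = seg a b c i (np + nq) := by
    rw [seg_append, ← hp, ← hq']
  have hpqinf : ∃ k, (p ++ q) <:+: wpow [a, b, c, a, c, b] k := by
    refine ⟨K, ?_⟩
    rw [infix_iff a b c]
    exact ⟨i, by simp only [List.length_append]; omega, by
      rwa [show (p ++ q).length = np + nq by simp only [List.length_append]; rfl]⟩
  rcases h with h | h
  · exact absurd hpqinf h
  obtain ⟨k0, hk0⟩ := h
  -- p ++ q = w^(1+2k0), aligned at a multiple of 6
  have hk0' : p ++ q = seg a b c 0 (6 * (1 + 2 * k0)) := by rw [hk0, wpow_eq]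
  have hlenpq : np + nq = 6 * (1 + 2 * k0) := by
    have := congrArg List.length hk0'
    simp [List.length_append, seg_length] at this
    omega
  have hi6 : i % 6 = 0 := by
    have h0 : seg a b c i (np + nq) = seg a b c 0 (np + nq) := by
      rw [← hpq, hk0', hlenpq]
    rw [seg_eq_iff] at h0
    apply AL (n := np + nq) (by omega)
    intro t ht
    have := h0 t ht
    rw [xw_eq_iff hab hac hbc] at this
    simpa using this
  -- conclude
  refine Or.inr ⟨k0 + d / 6, ?_⟩
  rw [wpow_eq, List.append_assoc, List.append_assoc, heq,
    ← seg_append, ← seg_append, ← seg_append]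
  rw [show i = 0 + 6 * (i / 6) by omega, seg_shift]
  congr 1
  omega
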